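/- Consider a hybrid system with continuous dynamics ẋ = f(x) on ℝⁿ \ S, guard set S ⊂ ℝⁿ, and reset map Δ : S → ℝⁿ. Suppose V : ℝⁿ → ℝ is C¹ and (1) ⟨∇V(x), f(x)⟩ > 0 whenever V(x) = 0 and x ∉ S, and (2) V(Δ(x)) ≥ 0 for all x ∈ S with V(x) ≥ 0. Then every hybrid execution starting in {V ≥ 0} remains in {V ≥ 0} for all time. -/

import Mathlib

open RealInnerProductSpace

section Helper
open Set
lemma arc_nonneg {n : ℕ}
    (f : EuclideanSpace ℝ (Fin n) → EuclideanSpace ℝ (Fin n))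
    (S : Set (EuclideanSpace ℝ (Fin n)))
    (V : EuclideanSpace ℝ (Fin n) → ℝ) (hV : ContDiff ℝ 1 V)
    (hflow : ∀ x ∉ S, V x = 0 → 0 < ⟪gradient V x, f x⟫)
    {a b : ℝ} {x : ℝ → EuclideanSpace ℝ (Fin n)}
    (hx : ∀ t ∈ Icc a b, HasDerivAt x (f (x t)) t)
    (hoff : ∀ t ∈ Ico a b, x t ∉ S)
    (h0 : 0 ≤ V (x a)) : ∀ t ∈ Icc a b, 0 ≤ V (x t) := by
  set g : ℝ → ℝ := fun t => V (x t) with hgdef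
  have hg : ∀ t ∈ Icc a b, HasDerivAt g ⟪gradient V (x t), f (x t)⟫ t := by
    intro t ht
    have hgr : HasGradientAt V (gradient V (x t)) (x t) :=
      (hV.differentiable one_ne_zero (x t)).hasGradientAt
    have := hgr.hasFDerivAt.comp_hasDerivAt t (hx t ht)
    exact this
  have hgc : ∀ t ∈ Icc a b, ContinuousAt g t := fun t ht => (hg t ht).continuousAt
  by_contra hcon
  push_neg at hcon
  obtain ⟨t0, ht0, hneg⟩ := hcon
  have hat0 : a < t0 := by
    rcases eq_or_lt_of_le ht0.1 with h | h
    · exact absurd h0 (by rw [h]; exact not_le.mpr hneg)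
    · exact h
  set T : Set ℝ := Icc a t0 ∩ g ⁻¹' Ici 0 with hT
  have hTne : T.Nonempty := ⟨a, ⟨le_rfl, le_of_lt hat0⟩, h0⟩
  have hTbdd : BddAbove T := ⟨t0, fun u hu => hu.1.2⟩
  have hsubIcc : Icc a t0 ⊆ Icc a b := Icc_subset_Icc le_rfl ht0.2
  have hTclosed : IsClosed T := by
    apply (ContinuousOn.preimage_isClosed_of_isClosed ?_ isClosed_Icc isClosed_Ici)
    exact fun u hu => (hgc u (hsubIcc hu)).continuousWithinAt
  have hsmem : sSup T ∈ T := hTclosed.csSup_mem hTne hTbdd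
  set s := sSup T with hs
  have hsIcc : s ∈ Icc a t0 := hsmem.1
  have hgs_nonneg : 0 ≤ g s := hsmem.2
  have hst0 : s < t0 := by
    rcases eq_or_lt_of_le hsIcc.2 with h | h
    · exact absurd hgs_nonneg (by rw [h]; exact not_le.mpr hneg)
    · exact h
  have hlt : ∀ u ∈ Ioc s t0, g u < 0 := by
    intro u hu
    by_contra h
    push_neg at h
    exact absurd (le_csSup hTbdd ⟨⟨hsIcc.1.trans hu.1.le, hu.2⟩, h⟩) (not_le.mpr hu.1)
  have hsb : s ∈ Icc a b := ⟨hsIcc.1, hsIcc.2.trans ht0.2⟩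
  -- g s ≤ 0 by right continuity
  have hgs0 : g s = 0 := by
    refine le_antisymm ?_ hgs_nonneg
    have hc : ContinuousWithinAt g (Ioi s) s := (hgc s hsb).continuousWithinAt
    have hev : ∀ᶠ u in nhdsWithin s (Ioi s), g u ≤ 0 := by
      filter_upwards [Ioc_mem_nhdsGT_of_mem ⟨le_rfl, hst0⟩] with u hu
      exact (hlt u hu).le
    exact le_of_tendsto hc hev
  have hsoff : x s ∉ S := hoff s ⟨hsIcc.1, lt_of_lt_of_le hst0 ht0.2⟩
  have hder := hg s hsb
  have hpos : 0 < ⟪gradient V (x s), f (x s)⟫ := hflow (x s) hsoff hgs0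
  -- derivative positive, g s = 0, but g < 0 just to the right: contradiction
  have hslope := (hder.hasDerivWithinAt (s := Ioi s))
  rw [hasDerivWithinAt_iff_tendsto_slope] at hslope
  have hdiff : Ioi s \ {s} = Ioi s := by
    ext u; simp (config := {contextual := true}) [ne_of_gt]
  rw [hdiff] at hslope
  have hev1 : ∀ᶠ u in nhdsWithin s (Ioi s), 0 < slope g s u :=
    hslope.eventually (eventually_gt_nhds hpos)
  have hev2 : ∀ᶠ u in nhdsWithin s (Ioi s), u ∈ Ioc s t0 :=
    Ioc_mem_nhdsGT_of_mem ⟨le_rfl, hst0⟩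
  obtain ⟨u, hu1, hu2⟩ := (hev1.and hev2).exists
  have : g s < g u := by
    have hus : 0 < u - s := sub_pos.mpr hu2.1
    have := mul_pos hu1 hus
    rw [slope_def_field] at this
    have h2 : (g u - g s) / (u - s) * (u - s) = g u - g s := by
      field_simp
    rw [h2] at this
    linarith
  rw [hgs0] at this
  exact absurd (hlt u hu2) (not_lt.mpr this.le)

end Helper


/-- A hybrid execution of the hybrid system with continuous dynamics `ẋ = f(x)`
off the guard `S`, and reset map `Δ` applied on `S`: a sequence of event times
`τ k` and continuous arcs `arc k` defined on `[τ k, τ (k+1)]`, flowing along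
`f`, staying off the guard in the interior of each arc, hitting the guard at
the end of each arc, and jumping via `Δ` between consecutive arcs. -/
structure HybridExecution {X : Type*} [NormedAddCommGroup X] [NormedSpace ℝ X]
    (f : X → X) (S : Set X) (Δ : X → X) where
  τ : ℕ → ℝ
  mono : Monotone τ
  arc : ℕ → ℝ → X
  flow : ∀ k, ∀ t ∈ Set.Icc (τ k) (τ (k + 1)), HasDerivAt (arc k) (f (arc k t)) t
  offGuard : ∀ k, ∀ t ∈ Set.Ico (τ k) (τ (k + 1)), arc k t ∉ S
  hitGuard : ∀ k, arc k (τ (k + 1)) ∈ S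
  reset : ∀ k, arc (k + 1) (τ (k + 1)) = Δ (arc k (τ (k + 1)))

/-- hybrid forward invariance. If `V` is C¹ with
`⟨∇V(x), f(x)⟩ > 0` whenever `V(x) = 0` and `x ∉ S`, and `V(Δ(x)) ≥ 0` for all
`x ∈ S` with `V(x) ≥ 0`, then every hybrid execution starting in `{V ≥ 0}`
remains in `{V ≥ 0}` for all time. -/
theorem hybrid_forward_invariance {n : ℕ}
    (f : EuclideanSpace ℝ (Fin n) → EuclideanSpace ℝ (Fin n))
    (S : Set (EuclideanSpace ℝ (Fin n)))
    (Δ : EuclideanSpace ℝ (Fin n) → EuclideanSpace ℝ (Fin n))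
    (V : EuclideanSpace ℝ (Fin n) → ℝ) (hV : ContDiff ℝ 1 V)
    (hflow : ∀ x ∉ S, V x = 0 → 0 < ⟪gradient V x, f x⟫)
    (hjump : ∀ x ∈ S, 0 ≤ V x → 0 ≤ V (Δ x))
    (e : HybridExecution f S Δ)
    (h0 : 0 ≤ V (e.arc 0 (e.τ 0))) :
    ∀ k, ∀ t ∈ Set.Icc (e.τ k) (e.τ (k + 1)), 0 ≤ V (e.arc k t) := by
  have key : ∀ k, 0 ≤ V (e.arc k (e.τ k)) ∧
      ∀ t ∈ Set.Icc (e.τ k) (e.τ (k + 1)), 0 ≤ V (e.arc k t) := by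
    intro k
    induction k with
    | zero =>
      refine ⟨h0, arc_nonneg f S V hV hflow (e.flow 0) (e.offGuard 0) h0⟩
    | succ m ih =>
      have hend : 0 ≤ V (e.arc m (e.τ (m + 1))) :=
        ih.2 _ ⟨e.mono (Nat.le_succ m), le_rfl⟩
      have hstart : 0 ≤ V (e.arc (m + 1) (e.τ (m + 1))) := by
        rw [e.reset m]
        exact hjump _ (e.hitGuard m) hend
      exact ⟨hstart, arc_nonneg f S V hV hflow (e.flow (m + 1))
        (e.offGuard (m + 1)) hstart⟩
  exact fun k => (key k).2
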